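/- Let n ≥ 1, W a linear subspace of ℝⁿ, d, c ∈ ℝⁿ, P = {x ∈ ℝⁿ : x ∈ W + d, x ≥ 0}, D = {s ∈ ℝⁿ : s ∈ W⊥ + c, s ≥ 0}. Assume x⋆ ∈ P, s⋆ ∈ D with ⟨x⋆, s⋆⟩ = 0, and assume strictly feasible points exist: some x° ∈ P with x° > 0 and some s° ∈ D with s° > 0. For g ≥ 0 set P_g = {x ∈ P : ⟨x, s⋆⟩ ≤ g}, D_g = {s ∈ D : ⟨x⋆, s⟩ ≤ g}, and define the max central path coordinates x^m_i(g) = sup{x_i : x ∈ P_g} and s^m_i(g) = sup{s_i : s ∈ D_g}. Then for every g ≥ 0 and every i ∈ [n]: g ≤ x^m_i(g) · s^m_i(g) ≤ 2g. -/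

import Mathlib

open scoped RealInnerProductSpace
open Filter Topology

/-- The `i`-th coordinate `x^m_i(g)` of the primal max central path:
the supremum of `x i` over primal feasible points `x` with optimality gap at most `g`. -/
noncomputable def primalMCP (n : ℕ) (W : Submodule ℝ (EuclideanSpace ℝ (Fin n)))
    (d sstar : EuclideanSpace ℝ (Fin n)) (g : ℝ) (i : Fin n) : ℝ :=
  sSup {t : ℝ | ∃ x : EuclideanSpace ℝ (Fin n),
    x - d ∈ W ∧ (∀ j, 0 ≤ x j) ∧ ⟪x, sstar⟫ ≤ g ∧ t = x i}

/-- The `i`-th coordinate `s^m_i(g)` of the dual max central path: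
the supremum of `s i` over dual feasible points `s` with optimality gap at most `g`. -/
noncomputable def dualMCP (n : ℕ) (W : Submodule ℝ (EuclideanSpace ℝ (Fin n)))
    (c xstar : EuclideanSpace ℝ (Fin n)) (g : ℝ) (i : Fin n) : ℝ :=
  sSup {t : ℝ | ∃ s : EuclideanSpace ℝ (Fin n),
    s - c ∈ Wᗮ ∧ (∀ j, 0 ≤ s j) ∧ ⟪xstar, s⟫ ≤ g ∧ t = s i}

namespace Statement10Aux

lemma realInnerSum {n : ℕ} (x y : EuclideanSpace ℝ (Fin n)) : ⟪x, y⟫ = ∑ j, x j * y j := by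
  simp [PiLp.inner_apply, RCLike.inner_apply, mul_comm]

lemma flin {n : ℕ} (f : (EuclideanSpace ℝ (Fin n)) × ℝ × ℝ →L[ℝ] ℝ)
    (z : EuclideanSpace ℝ (Fin n)) (a b : ℝ) :
    f (z, a, b) = f (z, 0, 0) + a * f (0, 1, 0) + b * f (0, 0, 1) := by
  have h : (z, a, b) = (z, (0:ℝ), (0:ℝ)) + a • ((0 : EuclideanSpace ℝ (Fin n)), (1:ℝ), (0:ℝ))
      + b • ((0 : EuclideanSpace ℝ (Fin n)), (0:ℝ), (1:ℝ)) := by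
    simp [Prod.ext_iff]
  rw [h, map_add, map_add, map_smul, map_smul, smul_eq_mul, smul_eq_mul]

end Statement10Aux

set_option maxHeartbeats 2000000 in
open Statement10Aux in
theorem statement10 (n : ℕ) (hn : 1 ≤ n)
    (W : Submodule ℝ (EuclideanSpace ℝ (Fin n)))
    (d c xstar sstar x₀ s₀ : EuclideanSpace ℝ (Fin n))
    (hxstarW : xstar - d ∈ W) (hxstarpos : ∀ i, 0 ≤ xstar i)
    (hsstarW : sstar - c ∈ Wᗮ) (hsstarpos : ∀ i, 0 ≤ sstar i)
    (hopt : ⟪xstar, sstar⟫ = 0)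
    (hx₀W : x₀ - d ∈ W) (hx₀pos : ∀ i, 0 < x₀ i)
    (hs₀W : s₀ - c ∈ Wᗮ) (hs₀pos : ∀ i, 0 < s₀ i)
    (g : ℝ) (hg : 0 ≤ g) :
    ∀ i : Fin n,
      g ≤ primalMCP n W d sstar g i * dualMCP n W c xstar g i ∧
      primalMCP n W d sstar g i * dualMCP n W c xstar g i ≤ 2 * g := by
  classical
  intro i
  set A : Set ℝ := {t : ℝ | ∃ x : EuclideanSpace ℝ (Fin n),
    x - d ∈ W ∧ (∀ j, 0 ≤ x j) ∧ ⟪x, sstar⟫ ≤ g ∧ t = x i} with hA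
  set B : Set ℝ := {t : ℝ | ∃ s : EuclideanSpace ℝ (Fin n),
    s - c ∈ Wᗮ ∧ (∀ j, 0 ≤ s j) ∧ ⟪xstar, s⟫ ≤ g ∧ t = s i} with hB
  have hPA : primalMCP n W d sstar g i = sSup A := rfl
  have hDB : dualMCP n W c xstar g i = sSup B := rfl
  have hopt' : ⟪sstar, xstar⟫ = 0 := by rw [real_inner_comm]; exact hopt
  -- the optimality-gap identity
  have hgap : ∀ x s : EuclideanSpace ℝ (Fin n), x - d ∈ W → s - c ∈ Wᗮ →
      ⟪x, s⟫ = ⟪x, sstar⟫ + ⟪xstar, s⟫ := by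
    intro x s hx hs
    have hxW : x - xstar ∈ W := by
      have h := sub_mem hx hxstarW
      have e : (x - d) - (xstar - d) = x - xstar := by abel
      rwa [e] at h
    have hsW : s - sstar ∈ Wᗮ := by
      have h := sub_mem hs hsstarW
      have e : (s - c) - (sstar - c) = s - sstar := by abel
      rwa [e] at h
    have h0 : ⟪x - xstar, s - sstar⟫ = 0 :=
      (Submodule.mem_orthogonal W _).1 hsW _ hxW
    rw [inner_sub_left, inner_sub_right, inner_sub_right] at h0
    linarith [h0, hopt]
  have hxstarA : xstar i ∈ A := ⟨xstar, hxstarW, hxstarpos, by rw [hopt]; exact hg, rfl⟩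
  have hsstarB : sstar i ∈ B := ⟨sstar, hsstarW, hsstarpos, by rw [hopt]; exact hg, rfl⟩
  have hAne : A.Nonempty := ⟨xstar i, hxstarA⟩
  have hBne : B.Nonempty := ⟨sstar i, hsstarB⟩
  have hAbdd : BddAbove A := by
    refine ⟨(g + ⟪xstar, s₀⟫) / s₀ i, ?_⟩
    rintro t ⟨x, hxW, hxpos, hxgap, rfl⟩
    have h1 : x i * s₀ i ≤ ⟪x, s₀⟫ := by
      rw [realInnerSum]
      exact Finset.single_le_sum (fun j _ => mul_nonneg (hxpos j) (hs₀pos j).le)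
        (Finset.mem_univ i)
    have h2 : ⟪x, s₀⟫ ≤ g + ⟪xstar, s₀⟫ := by
      rw [hgap x s₀ hxW hs₀W]; linarith
    rw [le_div_iff₀ (hs₀pos i)]
    linarith
  have hBbdd : BddAbove B := by
    refine ⟨(g + ⟪x₀, sstar⟫) / x₀ i, ?_⟩
    rintro t ⟨s, hsW, hspos, hsgap, rfl⟩
    have h1 : x₀ i * s i ≤ ⟪x₀, s⟫ := by
      rw [realInnerSum]
      exact Finset.single_le_sum (fun j _ => mul_nonneg (hx₀pos j).le (hspos j))
        (Finset.mem_univ i)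
    have h2 : ⟪x₀, s⟫ ≤ ⟪x₀, sstar⟫ + g := by
      rw [hgap x₀ s hx₀W hsW]; linarith
    rw [le_div_iff₀ (hx₀pos i)]
    linarith
  have hSA0 : 0 ≤ sSup A := le_trans (hxstarpos i) (le_csSup hAbdd hxstarA)
  have hSB0 : 0 ≤ sSup B := le_trans (hsstarpos i) (le_csSup hBbdd hsstarB)
  -- the upper bound
  have hkey : ∀ a ∈ A, ∀ b ∈ B, a * b ≤ 2 * g := by
    rintro _ ⟨x, hxW, hxpos, hxgap, rfl⟩ _ ⟨s, hsW, hspos, hsgap, rfl⟩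
    have h1 : x i * s i ≤ ⟪x, s⟫ := by
      rw [realInnerSum]
      exact Finset.single_le_sum (fun j _ => mul_nonneg (hxpos j) (hspos j))
        (Finset.mem_univ i)
    have h2 : ⟪x, s⟫ ≤ 2 * g := by
      rw [hgap x s hxW hsW]; linarith
    linarith
  have hUB : sSup A * sSup B ≤ 2 * g := by
    rcases eq_or_lt_of_le hSB0 with h0 | hpos
    · rw [← h0, mul_zero]; linarith
    · have h1 : ∀ a ∈ A, a ≤ 2 * g / sSup B := by
        intro a ha
        rcases le_or_gt a 0 with ha0 | ha0
        · exact ha0.trans (div_nonneg (by linarith) hpos.le)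
        · have h2 : sSup B ≤ 2 * g / a := by
            apply csSup_le hBne
            intro b hb
            rw [le_div_iff₀ ha0]
            calc b * a = a * b := mul_comm _ _
              _ ≤ 2 * g := hkey a ha b hb
          rw [le_div_iff₀ hpos]
          calc a * sSup B ≤ a * (2 * g / a) := mul_le_mul_of_nonneg_left h2 ha0.le
            _ = 2 * g := by field_simp
      have h3 := csSup_le hAne h1
      rw [le_div_iff₀ hpos] at h3
      exact h3
  rw [hPA, hDB]
  refine ⟨?_, hUB⟩
  -- lower bound
  rcases hg.eq_or_lt with hg0 | hgpos
  · rw [← hg0]; exact mul_nonneg hSA0 hSB0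
  -- g > 0 : first, sSup A > 0
  have hγ : 0 ≤ ⟪x₀, sstar⟫ := by
    rw [realInnerSum]
    exact Finset.sum_nonneg fun j _ => mul_nonneg (hx₀pos j).le (hsstarpos j)
  have hSApos : 0 < sSup A := by
    set γ := ⟪x₀, sstar⟫ with hγdef
    have hden : 0 < γ + g := by linarith
    set t : ℝ := g / (γ + g) with htdef
    have htpos : 0 < t := div_pos hgpos hden
    have ht1 : t ≤ 1 := by rw [htdef, div_le_one hden]; linarith
    set x' := xstar + t • (x₀ - xstar) with hx'
    have hx'W : x' - d ∈ W := by
      have e : x' - d = (xstar - d) + t • ((x₀ - d) - (xstar - d)) := by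
        rw [hx']; module
      rw [e]
      exact add_mem hxstarW (Submodule.smul_mem _ _ (sub_mem hx₀W hxstarW))
    have hx'co : ∀ j, x' j = xstar j + t * (x₀ j - xstar j) := by
      intro j
      simp [hx', PiLp.add_apply, PiLp.smul_apply, PiLp.sub_apply, smul_eq_mul]
    have hx'pos : ∀ j, 0 ≤ x' j := by
      intro j
      rw [hx'co j]
      nlinarith [hxstarpos j, (hx₀pos j).le, htpos.le, ht1]
    have hx'gap : ⟪x', sstar⟫ ≤ g := by
      have e : ⟪x', sstar⟫ = ⟪xstar, sstar⟫ + t * ⟪x₀ - xstar, sstar⟫ := by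
        rw [hx', inner_add_left, real_inner_smul_left]
      rw [e, hopt, inner_sub_left, hopt, zero_add, sub_zero]
      rw [htdef, div_mul_eq_mul_div, div_le_iff₀ hden]
      nlinarith
    have hx'A : x' i ∈ A := ⟨x', hx'W, hx'pos, hx'gap, rfl⟩
    have h5 : 0 < x' i := by
      rw [hx'co i]
      nlinarith [hxstarpos i, hx₀pos i, htpos, ht1]
    exact lt_of_lt_of_le h5 (le_csSup hAbdd hx'A)
  -- approximate LP duality via hyperplane separation
  have hdual : ∀ ε : ℝ, 0 < ε → ∃ (y : EuclideanSpace ℝ (Fin n)) (lam : ℝ),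
      y ∈ Wᗮ ∧ 0 ≤ lam ∧ (∀ j, 0 ≤ y j + lam * sstar j) ∧
      (1 ≤ y i + lam * sstar i) ∧ ⟪xstar, y⟫ + lam * g < sSup A + ε := by
    intro ε hε
    set C : Set ((EuclideanSpace ℝ (Fin n)) × ℝ × ℝ) :=
      {p | ∃ (x w : EuclideanSpace ℝ (Fin n)) (t r : ℝ),
        (∀ j, 0 ≤ x j) ∧ w ∈ W ∧ 0 ≤ t ∧ 0 ≤ r ∧
        p = (x - w, ⟪sstar, x⟫ + t, x i - r)} with hC
    have hC0 : (0 : (EuclideanSpace ℝ (Fin n)) × ℝ × ℝ) ∈ C := by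
      refine ⟨0, 0, 0, 0, fun j => le_refl 0, zero_mem W, le_refl 0, le_refl 0, ?_⟩
      simp [Prod.ext_iff]
    have hCcone : ∀ p ∈ C, ∀ θ : ℝ, 0 ≤ θ → θ • p ∈ C := by
      rintro p ⟨x1, w1, t1, r1, hx1, hw1, ht1, hr1, rfl⟩ θ hθ
      refine ⟨θ • x1, θ • w1, θ * t1, θ * r1, fun j => ?_, W.smul_mem θ hw1,
        mul_nonneg hθ ht1, mul_nonneg hθ hr1, ?_⟩
      · simp only [PiLp.smul_apply, smul_eq_mul]
        exact mul_nonneg hθ (hx1 j)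
      · simp only [Prod.smul_mk, smul_eq_mul, Prod.mk.injEq]
        refine ⟨by rw [smul_sub], ?_, ?_⟩
        · rw [real_inner_smul_right]; ring
        · simp only [PiLp.smul_apply, smul_eq_mul]; ring
    have hCconvex : Convex ℝ C := by
      rintro p ⟨x1, w1, t1, r1, hx1, hw1, ht1, hr1, rfl⟩ q
        ⟨x2, w2, t2, r2, hx2, hw2, ht2, hr2, rfl⟩ a b ha hb hab
      refine ⟨a • x1 + b • x2, a • w1 + b • w2, a * t1 + b * t2, a * r1 + b * r2,
        fun j => ?_, add_mem (W.smul_mem a hw1) (W.smul_mem b hw2),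
        add_nonneg (mul_nonneg ha ht1) (mul_nonneg hb ht2),
        add_nonneg (mul_nonneg ha hr1) (mul_nonneg hb hr2), ?_⟩
      · simp only [PiLp.add_apply, PiLp.smul_apply, smul_eq_mul]
        exact add_nonneg (mul_nonneg ha (hx1 j)) (mul_nonneg hb (hx2 j))
      · simp only [Prod.smul_mk, smul_eq_mul, Prod.mk_add_mk, Prod.mk.injEq]
        refine ⟨?_, ?_, ?_⟩
        · rw [smul_sub, smul_sub]; abel
        · rw [inner_add_right, real_inner_smul_right, real_inner_smul_right]; ring
        · simp only [PiLp.add_apply, PiLp.smul_apply, PiLp.sub_apply, smul_eq_mul]; ring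
    -- the target point is not in the closure of C
    have hbnot : ((d, g, sSup A + ε) : (EuclideanSpace ℝ (Fin n)) × ℝ × ℝ) ∉ closure C := by
      intro hmem
      obtain ⟨p, hpC, hplim⟩ := mem_closure_iff_seq_limit.1 hmem
      simp only [hC, Set.mem_setOf_eq] at hpC
      choose x w t r hxpos hwW ht hr hp using hpC
      have hl1 : Tendsto (fun k => x k - w k) atTop (𝓝 d) := by
        have h := (continuous_fst.tendsto _).comp hplim
        exact Filter.Tendsto.congr (fun k => by show (p k).1 = _; rw [hp k]) h
      have hl2 : Tendsto (fun k => ⟪sstar, x k⟫ + t k) atTop (𝓝 g) := by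
        have h := ((continuous_fst.comp continuous_snd).tendsto _).comp hplim
        exact Filter.Tendsto.congr (fun k => by show (p k).2.1 = _; rw [hp k]) h
      have hl3 : Tendsto (fun k => x k i - r k) atTop (𝓝 (sSup A + ε)) := by
        have h := ((continuous_snd.comp continuous_snd).tendsto _).comp hplim
        exact Filter.Tendsto.congr (fun k => by show (p k).2.2 = _; rw [hp k]) h
      have hs0W' : s₀ - sstar ∈ Wᗮ := by
        have h := sub_mem hs₀W hsstarW
        have e : (s₀ - c) - (sstar - c) = s₀ - sstar := by abel
        rwa [e] at h
      have hqlim : Tendsto (fun k => ⟪x k - w k, s₀ - sstar⟫ + (⟪sstar, x k⟫ + t k))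
          atTop (𝓝 (⟪d, s₀ - sstar⟫ + g)) := (hl1.inner tendsto_const_nhds).add hl2
      obtain ⟨M, hM⟩ : ∃ M : ℝ, ∀ k, ⟪x k - w k, s₀ - sstar⟫ + (⟪sstar, x k⟫ + t k) ≤ M := by
        obtain ⟨M, hM⟩ := hqlim.bddAbove_range
        exact ⟨M, fun k => hM (Set.mem_range_self k)⟩
      have hxb : ∀ k j, x k j ≤ M / s₀ j := by
        intro k j
        have hw0 : ⟪w k, s₀ - sstar⟫ = 0 :=
          (Submodule.mem_orthogonal W _).1 hs0W' _ (hwW k)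
        have h1 : x k j * s₀ j ≤ ⟪x k, s₀⟫ := by
          rw [realInnerSum]
          exact Finset.single_le_sum (fun j' _ => mul_nonneg (hxpos k j') (hs₀pos j').le)
            (Finset.mem_univ j)
        have h2 : ⟪x k, s₀⟫ = ⟪x k - w k, s₀ - sstar⟫ + ⟪sstar, x k⟫ := by
          rw [inner_sub_left, hw0, sub_zero, inner_sub_right, real_inner_comm (x k) sstar]
          ring
        have h3 : ⟪x k, s₀⟫ ≤ M := by
          rw [h2]
          have := hM k
          linarith [ht k]
        rw [le_div_iff₀ (hs₀pos j)]
        linarith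
      set R : ℝ := Real.sqrt (∑ j : Fin n, (max M 0 / s₀ j) ^ 2) with hR
      have hxR : ∀ k, x k ∈ Metric.closedBall (0 : EuclideanSpace ℝ (Fin n)) R := by
        intro k
        rw [Metric.mem_closedBall, dist_zero_right, EuclideanSpace.norm_eq, hR]
        apply Real.sqrt_le_sqrt
        apply Finset.sum_le_sum
        intro j _
        have h1 : 0 ≤ x k j := hxpos k j
        have h2 : x k j ≤ max M 0 / s₀ j :=
          le_trans (hxb k j) ((div_le_div_iff_of_pos_right (hs₀pos j)).2 (le_max_left M 0))
        rw [Real.norm_eq_abs, sq_abs]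
        nlinarith
      obtain ⟨xhat, -, φ, hφ, hconv⟩ :=
        tendsto_subseq_of_bounded Metric.isBounded_closedBall hxR
      have hφt : Tendsto φ atTop atTop := hφ.tendsto_atTop
      have hxhatpos : ∀ j, 0 ≤ xhat j := by
        intro j
        have hev : Tendsto (fun k => ⟪EuclideanSpace.single j (1:ℝ), x (φ k)⟫) atTop
            (𝓝 ⟪EuclideanSpace.single j (1:ℝ), xhat⟫) := tendsto_const_nhds.inner hconv
        have h := ge_of_tendsto hev (Filter.Eventually.of_forall fun k => by
          simpa [EuclideanSpace.inner_single_left] using hxpos (φ k) j)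
        simpa [EuclideanSpace.inner_single_left] using h
      have hwconv : Tendsto (fun k => w (φ k)) atTop (𝓝 (xhat - d)) := by
        have h := hconv.sub (hl1.comp hφt)
        simpa [Function.comp] using h
      have hxhatW : xhat - d ∈ W := by
        have hcl : IsClosed (W : Set (EuclideanSpace ℝ (Fin n))) :=
          Submodule.closed_of_finiteDimensional W
        exact hcl.mem_of_tendsto hwconv (Filter.Eventually.of_forall fun k => hwW (φ k))
      have hinner : Tendsto (fun k => ⟪sstar, x (φ k)⟫) atTop (𝓝 ⟪sstar, xhat⟫) :=
        tendsto_const_nhds.inner hconv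
      have hgl : ⟪sstar, xhat⟫ ≤ g := by
        have htl : Tendsto (fun k => (⟪sstar, x (φ k)⟫ + t (φ k)) - ⟪sstar, x (φ k)⟫)
            atTop (𝓝 (g - ⟪sstar, xhat⟫)) := (hl2.comp hφt).sub hinner
        have h0 : (0:ℝ) ≤ g - ⟪sstar, xhat⟫ :=
          ge_of_tendsto htl (Filter.Eventually.of_forall fun k => by
            simpa using ht (φ k))
        linarith
      have hxi : Tendsto (fun k => x (φ k) i) atTop (𝓝 (xhat i)) := by
        have hev : Tendsto (fun k => ⟪EuclideanSpace.single i (1:ℝ), x (φ k)⟫) atTop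
            (𝓝 ⟪EuclideanSpace.single i (1:ℝ), xhat⟫) := tendsto_const_nhds.inner hconv
        simpa [EuclideanSpace.inner_single_left] using hev
      have hxhati : sSup A + ε ≤ xhat i := by
        have hrl : Tendsto (fun k => x (φ k) i - (x (φ k) i - r (φ k))) atTop
            (𝓝 (xhat i - (sSup A + ε))) := hxi.sub (hl3.comp hφt)
        have h0 : (0:ℝ) ≤ xhat i - (sSup A + ε) :=
          ge_of_tendsto hrl (Filter.Eventually.of_forall fun k => by
            simpa using hr (φ k))
        linarith
      have hmemA : xhat i ∈ A :=
        ⟨xhat, hxhatW, hxhatpos, by rw [real_inner_comm]; exact hgl, rfl⟩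
      have := le_csSup hAbdd hmemA
      linarith
    -- separation
    obtain ⟨f, u, hfu, hub⟩ :=
      geometric_hahn_banach_closed_point (hCconvex.closure) isClosed_closure hbnot
    have hu0 : 0 < u := by
      have h := hfu 0 (subset_closure hC0)
      simpa using h
    have hfC : ∀ p ∈ C, f p ≤ 0 := by
      intro p hp
      by_contra h
      push_neg at h
      have h2 : ∀ θ : ℝ, 0 ≤ θ → θ * f p < u := by
        intro θ hθ
        have h3 := hfu (θ • p) (subset_closure (hCcone p hp θ hθ))
        simpa [map_smul, smul_eq_mul] using h3
      have h4 := h2 (u / f p) (div_nonneg hu0.le h.le)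
      rw [div_mul_cancel₀ _ (ne_of_gt h)] at h4
      exact lt_irrefl u h4
    -- decompose the functional
    set l : EuclideanSpace ℝ (Fin n) →L[ℝ] ℝ :=
      f.comp (ContinuousLinearMap.inl ℝ (EuclideanSpace ℝ (Fin n)) (ℝ × ℝ)) with hl
    set w₀ : EuclideanSpace ℝ (Fin n) :=
      (InnerProductSpace.toDual ℝ (EuclideanSpace ℝ (Fin n))).symm l with hw₀def
    have hw₀app : ∀ z : EuclideanSpace ℝ (Fin n), ⟪w₀, z⟫ = f (z, 0, 0) := by
      intro z
      rw [hw₀def, InnerProductSpace.toDual_symm_apply]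
      rfl
    set α : ℝ := f (0, 1, 0) with hα
    set β : ℝ := f (0, 0, 1) with hβ
    have hflin : ∀ (z : EuclideanSpace ℝ (Fin n)) (a b : ℝ),
        f (z, a, b) = ⟪w₀, z⟫ + a * α + b * β := by
      intro z a b
      rw [flin f z a b, hw₀app]
    have hαle : α ≤ 0 := by
      have hmem : ((0, 1, 0) : (EuclideanSpace ℝ (Fin n)) × ℝ × ℝ) ∈ C := by
        refine ⟨0, 0, 1, 0, fun j => le_refl 0, zero_mem W, zero_le_one, le_refl 0, ?_⟩
        simp [Prod.ext_iff]
      exact hfC _ hmem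
    have hβge : 0 ≤ β := by
      have hmem : ((0, 0, -1) : (EuclideanSpace ℝ (Fin n)) × ℝ × ℝ) ∈ C := by
        refine ⟨0, 0, 0, 1, fun j => le_refl 0, zero_mem W, le_refl 0, zero_le_one, ?_⟩
        simp [Prod.ext_iff]
      have h := hfC _ hmem
      rw [hflin] at h
      simp at h
      linarith
    have hw₀W : w₀ ∈ Wᗮ := by
      rw [Submodule.mem_orthogonal]
      intro v hv
      have hmem : ∀ v' : EuclideanSpace ℝ (Fin n), v' ∈ W →
          ((v', 0, 0) : (EuclideanSpace ℝ (Fin n)) × ℝ × ℝ) ∈ C := by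
        intro v' hv'
        refine ⟨0, -v', 0, 0, fun j => le_refl 0, neg_mem hv', le_refl 0, le_refl 0, ?_⟩
        simp [Prod.ext_iff]
      have h1 := hfC _ (hmem v hv)
      have h2 := hfC _ (hmem (-v) (neg_mem hv))
      rw [hflin] at h1 h2
      simp only [mul_zero, zero_mul, add_zero] at h1 h2
      rw [inner_neg_right] at h2
      have h3 : ⟪w₀, v⟫ = 0 := le_antisymm (by linarith) (by linarith)
      rw [real_inner_comm]
      exact h3
    have hcomp : ∀ j : Fin n,
        ⟪w₀, EuclideanSpace.single j (1:ℝ)⟫ + sstar j * α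
          + (EuclideanSpace.single j (1:ℝ)) i * β ≤ 0 := by
      intro j
      have hmem : ((EuclideanSpace.single j (1:ℝ), sstar j,
          (EuclideanSpace.single j (1:ℝ)) i) : (EuclideanSpace ℝ (Fin n)) × ℝ × ℝ) ∈ C := by
        refine ⟨EuclideanSpace.single j (1:ℝ), 0, 0, 0,
          fun j' => ?_, zero_mem W, le_refl 0, le_refl 0, ?_⟩
        · simp [EuclideanSpace.single_apply]
          split <;> norm_num
        · simp [Prod.ext_iff, EuclideanSpace.inner_single_right]
      have h := hfC _ hmem
      rw [hflin] at h
      exact h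
    have hbval : 0 < ⟪w₀, d⟫ + g * α + (sSup A + ε) * β := by
      have h := hub
      rw [hflin] at h
      linarith
    have hβpos : 0 < β := by
      rcases hβge.eq_or_lt with h0 | h; swap
      · exact h
      exfalso
      have hmem : ((d, 0, 0) : (EuclideanSpace ℝ (Fin n)) × ℝ × ℝ) ∈ C := by
        refine ⟨xstar, xstar - d, 0, xstar i, hxstarpos, hxstarW, le_refl 0,
          hxstarpos i, ?_⟩
        simp [Prod.ext_iff, hopt']
      have h1 := hfC _ hmem
      rw [hflin] at h1
      simp only [mul_zero, zero_mul, add_zero] at h1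
      have hgα : g * α ≤ 0 := mul_nonpos_of_nonneg_of_nonpos hgpos.le hαle
      rw [← h0] at hbval
      simp only [mul_zero, add_zero] at hbval
      linarith
    -- build the dual certificate
    refine ⟨β⁻¹ • (-w₀), -α / β, Submodule.smul_mem _ _ (neg_mem hw₀W),
      div_nonneg (by linarith) hβpos.le, ?_, ?_, ?_⟩
    · intro j
      have h := hcomp j
      have hw : ⟪w₀, EuclideanSpace.single j (1:ℝ)⟫ = w₀ j := by
        simp [EuclideanSpace.inner_single_right]
      have hco : (β⁻¹ • (-w₀)) j = -(w₀ j) / β := by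
        simp only [PiLp.smul_apply, PiLp.neg_apply, smul_eq_mul]
        field_simp
      rw [hco]
      rw [hw] at h
      have hχ : 0 ≤ (EuclideanSpace.single j (1:ℝ)) i * β := by
        apply mul_nonneg _ hβge
        simp [EuclideanSpace.single_apply]
        split <;> norm_num
      have h2 : w₀ j + sstar j * α ≤ 0 := by linarith
      have e : -(w₀ j) / β + -α / β * sstar j = (-(w₀ j) - α * sstar j) / β := by ring
      rw [e]
      apply div_nonneg _ hβpos.le
      linarith
    · have h := hcomp i
      have hw : ⟪w₀, EuclideanSpace.single i (1:ℝ)⟫ = w₀ i := by simp [EuclideanSpace.inner_single_right]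
      have hsi : (EuclideanSpace.single i (1:ℝ)) i = 1 := by
        simp [EuclideanSpace.single_apply]
      rw [hw, hsi, one_mul] at h
      have hco : (β⁻¹ • (-w₀)) i = -(w₀ i) / β := by
        simp only [PiLp.smul_apply, PiLp.neg_apply, smul_eq_mul]
        field_simp
      rw [hco]
      have e : -(w₀ i) / β + -α / β * sstar i = (-(w₀ i) - α * sstar i) / β := by ring
      rw [e, le_div_iff₀ hβpos]
      linarith
    · have hxd : ⟪xstar, w₀⟫ = ⟪w₀, d⟫ := by
        have h0 : ⟪xstar - d, w₀⟫ = 0 :=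
          (Submodule.mem_orthogonal W _).1 hw₀W _ hxstarW
        rw [inner_sub_left] at h0
        rw [real_inner_comm d w₀]
        linarith
      have he : ⟪xstar, β⁻¹ • (-w₀)⟫ + (-α / β) * g = (-(⟪w₀, d⟫) - g * α) / β := by
        rw [real_inner_smul_right, inner_neg_right, hxd]
        field_simp
        ring
      rw [he, div_lt_iff₀ hβpos]
      nlinarith [hbval]
  -- use the dual certificate to get the lower bound
  have hstep : ∀ ε : ℝ, 0 < ε → g / (sSup A + ε) ≤ sSup B := by
    intro ε hε
    obtain ⟨y, lam, hyW, hlam, hynn, hyi, hval⟩ := hdual ε hε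
    set V : ℝ := ⟪xstar, y⟫ + lam * g with hV
    have hxy0 : 0 ≤ ⟪xstar, y⟫ := by
      have h1 : 0 ≤ ∑ j : Fin n, xstar j * (y j + lam * sstar j) :=
        Finset.sum_nonneg fun j _ => mul_nonneg (hxstarpos j) (hynn j)
      have h2 : ∑ j : Fin n, xstar j * (y j + lam * sstar j)
          = ⟪xstar, y⟫ + lam * ⟪xstar, sstar⟫ := by
        rw [realInnerSum, realInnerSum, Finset.mul_sum, ← Finset.sum_add_distrib]
        congr 1
        ext j
        ring
      rw [h2, hopt, mul_zero, add_zero] at h1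
      exact h1
    have hVA : sSup A ≤ V := by
      apply csSup_le hAne
      rintro _ ⟨x, hxW, hxpos, hxgap, rfl⟩
      have h1 : x i ≤ ∑ j : Fin n, x j * (y j + lam * sstar j) := by
        calc x i = x i * 1 := (mul_one _).symm
          _ ≤ x i * (y i + lam * sstar i) := mul_le_mul_of_nonneg_left hyi (hxpos i)
          _ ≤ ∑ j : Fin n, x j * (y j + lam * sstar j) :=
            Finset.single_le_sum (fun j _ => mul_nonneg (hxpos j) (hynn j))
              (Finset.mem_univ i)
      have h2 : ∑ j : Fin n, x j * (y j + lam * sstar j)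
          = ⟪x, y⟫ + lam * ⟪x, sstar⟫ := by
        rw [realInnerSum, realInnerSum, Finset.mul_sum, ← Finset.sum_add_distrib]
        congr 1
        ext j
        ring
      have h3 : ⟪x, y⟫ = ⟪xstar, y⟫ := by
        have hxW' : x - xstar ∈ W := by
          have h := sub_mem hxW hxstarW
          have e : (x - d) - (xstar - d) = x - xstar := by abel
          rwa [e] at h
        have h4 : ⟪x - xstar, y⟫ = 0 :=
          (Submodule.mem_orthogonal W _).1 hyW _ hxW'
        rw [inner_sub_left] at h4
        linarith
      have h5 : lam * ⟪x, sstar⟫ ≤ lam * g := mul_le_mul_of_nonneg_left hxgap hlam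
      rw [hV]
      rw [h2, h3] at h1
      linarith
    have hVpos : 0 < V := lt_of_lt_of_le hSApos hVA
    set τ : ℝ := g / V with hτ
    have hτpos : 0 < τ := div_pos hgpos hVpos
    have hτlam : τ * lam ≤ 1 := by
      rw [hτ, div_mul_eq_mul_div, div_le_one hVpos, hV]
      nlinarith
    have hτV : τ * V = g := by
      rw [hτ]; field_simp
    set s' := sstar + τ • y with hs'
    have hs'c : s' - c ∈ Wᗮ := by
      have e : s' - c = (sstar - c) + τ • y := by rw [hs']; abel
      rw [e]
      exact add_mem hsstarW (Submodule.smul_mem _ _ hyW)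
    have hs'co : ∀ j, s' j = sstar j + τ * y j := by
      intro j
      simp [hs', PiLp.add_apply, PiLp.smul_apply, smul_eq_mul]
    have hs'pos : ∀ j, 0 ≤ s' j := by
      intro j
      rw [hs'co j]
      nlinarith [hynn j, hsstarpos j, hτpos.le, hτlam]
    have hs'gap : ⟪xstar, s'⟫ ≤ g := by
      have e : ⟪xstar, s'⟫ = ⟪xstar, sstar⟫ + τ * ⟪xstar, y⟫ := by
        rw [hs', inner_add_right, real_inner_smul_right]
      rw [e, hopt, zero_add]
      have h1 : ⟪xstar, y⟫ ≤ V := by rw [hV]; nlinarith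
      calc τ * ⟪xstar, y⟫ ≤ τ * V := mul_le_mul_of_nonneg_left h1 hτpos.le
        _ = g := hτV
    have hs'i : g / V ≤ s' i := by
      rw [hs'co i, ← hτ]
      nlinarith [hyi, hsstarpos i, hτpos.le, hτlam]
    have hs'B : s' i ∈ B := ⟨s', hs'c, hs'pos, hs'gap, rfl⟩
    have h6 : g / V ≤ sSup B := le_trans hs'i (le_csSup hBbdd hs'B)
    refine le_trans ?_ h6
    apply div_le_div_of_nonneg_left hgpos.le hVpos
    linarith [hval]
  have hSBpos : 0 < sSup B :=
    lt_of_lt_of_le (div_pos hgpos (by linarith)) (hstep 1 one_pos)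
  apply le_of_forall_pos_le_add
  intro δ hδ
  have h := hstep (δ / sSup B) (div_pos hδ hSBpos)
  have hpos : 0 < sSup A + δ / sSup B := by positivity
  rw [div_le_iff₀ hpos] at h
  calc g ≤ sSup B * (sSup A + δ / sSup B) := h
    _ = sSup A * sSup B + δ := by field_simp
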